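/- arXiv:1902.06869 — 3 statements merged into one kernel-verified Lean document; each statement's English description precedes it below -/
import Mathlib

section
/- Let m > 0, a₁ ≥ 0, a₂ ≥ 0, and 0 ≤ b < c. Then the integral ∫₀^∞ x·exp(−c x²)·I₀(a₁x)·I₀(a₂x)·₁F₁(m,1;b x²) dx converges and equals the absolutely convergent series ∑_{k=0}^∞ (k!/(2c^{k+1})) · ∑_{i=0}^{k} ∑_{n=0}^{i} [(m)_{k−i} b^{k−i}/((k−i)!)²] · [(a₁/2)^{2n}/(n!)²] · [(a₂/2)^{2(i−n)}/((i−n)!)²]. -/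
open MeasureTheory

/-- Pochhammer symbol (ascending factorial) `(m)_k = m (m+1) ⋯ (m+k-1)`. -/
noncomputable def poch (m : ℝ) (k : ℕ) : ℝ := ∏ j ∈ Finset.range k, (m + j)

/-- Modified Bessel function of the first kind of order zero,
`I₀(y) = ∑ (y/2)^{2n} / (n!)²`. -/
noncomputable def I0 (y : ℝ) : ℝ := ∑' n : ℕ, (y / 2) ^ (2 * n) / (Nat.factorial n : ℝ) ^ 2

/-- Confluent hypergeometric function `₁F₁(m, 1; z) = ∑ (m)_n zⁿ / (n!)²`. -/
noncomputable def F11 (m z : ℝ) : ℝ := ∑' n : ℕ, poch m n * z ^ n / (Nat.factorial n : ℝ) ^ 2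


lemma poch_pos {m : ℝ} (hm : 0 < m) (k : ℕ) : 0 < poch m k :=
  Finset.prod_pos fun j _ => by positivity

lemma poch_succ (m : ℝ) (k : ℕ) : poch m (k + 1) = poch m k * (m + k) :=
  Finset.prod_range_succ _ _

-- key bound: ∃ K, poch m l * b^l / l! ≤ K * θ^l
lemma exists_poch_bound {m b θ : ℝ} (hm : 0 < m) (hb : 0 ≤ b) (hθ : 0 < θ) (hbθ : b < θ) :
    ∃ K : ℝ, 0 < K ∧ ∀ l : ℕ, poch m l * b ^ l / (Nat.factorial l : ℝ) ≤ K * θ ^ l := by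
  set x : ℕ → ℝ := fun l => poch m l * b ^ l / ((Nat.factorial l : ℝ) * θ ^ l) with hx
  have hx0 : ∀ l, 0 ≤ x l := fun l => by
    have := (poch_pos hm l).le
    positivity
  rcases eq_or_lt_of_le hb with hb0 | hb0
  · refine ⟨1, one_pos, fun l => ?_⟩
    cases l with
    | zero => simp [poch]
    | succ n =>
      rw [← hb0]
      simp only [zero_pow (Nat.succ_ne_zero n), mul_zero, zero_div]
      positivity
  · -- b > 0 : ratio test
    have hxpos : ∀ l, 0 < x l := fun l => by
      have h1 := poch_pos hm l
      have h2 : (0:ℝ) < (Nat.factorial l : ℝ) := by positivity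
      have h3 : (0:ℝ) < θ ^ l := by positivity
      have : (0:ℝ) < b ^ l := by positivity
      positivity
    have hratio : ∀ l : ℕ, x (l + 1) / x l = (m + l) / (l + 1) * (b / θ) := by
      intro l
      have h2 : ((Nat.factorial l : ℝ)) ≠ 0 := by positivity
      have h3 : θ ^ l ≠ 0 := by positivity
      have h4 : poch m l ≠ 0 := (poch_pos hm l).ne'
      have h5 : b ^ l ≠ 0 := by positivity
      rw [hx]
      simp only [poch_succ, pow_succ, Nat.factorial_succ, Nat.cast_mul, Nat.cast_add,
        Nat.cast_one]
      field_simp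
    have hlim : Filter.Tendsto (fun l : ℕ => x (l + 1) / x l) Filter.atTop (nhds (b / θ)) := by
      simp only [hratio]
      have h1 : Filter.Tendsto (fun l : ℕ => (m + l) / (l + 1)) Filter.atTop (nhds 1) := by
        have : (fun l : ℕ => (m + l) / (l + 1)) = fun l : ℕ => 1 + (m - 1) * (1 / (l + 1)) := by
          funext l
          have : ((l : ℝ) + 1) ≠ 0 := by positivity
          field_simp
          ring
        rw [this]
        have h2 : Filter.Tendsto (fun l : ℕ => 1 / ((l : ℝ) + 1)) Filter.atTop (nhds 0) :=
          tendsto_one_div_add_atTop_nhds_zero_nat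
        have := (h2.const_mul (m - 1)).const_add 1
        simpa using this
      have := h1.mul_const (b / θ)
      simpa using this
    have hsum : Summable x := by
      refine summable_of_ratio_test_tendsto_lt_one ((div_lt_one hθ).2 hbθ)
        (Filter.Eventually.of_forall fun l => (hxpos l).ne') ?_
      have : (fun l : ℕ => ‖x (l + 1)‖ / ‖x l‖) = fun l => x (l + 1) / x l := by
        funext l
        rw [Real.norm_of_nonneg (hx0 _), Real.norm_of_nonneg (hx0 _)]
      rw [this]
      exact hlim
    have hbdd : BddAbove (Set.range x) := hsum.tendsto_atTop_zero.bddAbove_range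
    obtain ⟨K, hK⟩ := hbdd
    refine ⟨max K 1, lt_max_of_lt_right one_pos, fun l => ?_⟩
    have hxl : x l ≤ max K 1 := le_trans (hK (Set.mem_range_self l)) (le_max_left _ _)
    have hθl : (0:ℝ) < θ ^ l := by positivity
    have hfl : (0:ℝ) < (Nat.factorial l : ℝ) := by positivity
    calc poch m l * b ^ l / (Nat.factorial l : ℝ) = x l * θ ^ l := by
          rw [hx]; field_simp
      _ ≤ max K 1 * θ ^ l := by gcongr


noncomputable def cb (t : ℝ) (n : ℕ) : ℝ := t ^ n / (Nat.factorial n : ℝ) ^ 2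
noncomputable def cf (m b : ℝ) (l : ℕ) : ℝ := poch m l * b ^ l / (Nat.factorial l : ℝ) ^ 2

lemma cb_nonneg {t : ℝ} (ht : 0 ≤ t) (n : ℕ) : 0 ≤ cb t n := by unfold cb; positivity
lemma cf_nonneg {m b : ℝ} (hm : 0 < m) (hb : 0 ≤ b) (l : ℕ) : 0 ≤ cf m b l := by
  unfold cf; have := (poch_pos hm l).le; positivity

lemma summable_cb {t : ℝ} (ht : 0 ≤ t) : Summable (cb t) := by
  refine Summable.of_nonneg_of_le (cb_nonneg ht) (fun n => ?_)
    (Real.summable_pow_div_factorial t)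
  unfold cb
  have h1 : (0:ℝ) < (Nat.factorial n : ℝ) := by positivity
  have h2 : ((Nat.factorial n : ℝ)) ≤ (Nat.factorial n : ℝ) ^ 2 := by
    nlinarith [(Nat.one_le_cast (α := ℝ)).2 (Nat.one_le_iff_ne_zero.2 (Nat.factorial_ne_zero n))]
  exact div_le_div_of_nonneg_left (by positivity) h1 h2

lemma summable_cf {m b : ℝ} (hm : 0 < m) (hb : 0 ≤ b) : Summable (cf m b) := by
  obtain ⟨K, hK, hKb⟩ := exists_poch_bound hm hb (by linarith : (0:ℝ) < b + 1) (by linarith)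
  refine Summable.of_nonneg_of_le (cf_nonneg hm hb) (fun l => ?_)
    ((Real.summable_pow_div_factorial (b + 1)).mul_left K)
  have h1 : (0:ℝ) < (Nat.factorial l : ℝ) := by positivity
  have : cf m b l = (poch m l * b ^ l / (Nat.factorial l : ℝ)) / (Nat.factorial l : ℝ) := by
    unfold cf; rw [div_div, ← sq]
  rw [this]
  calc poch m l * b ^ l / (Nat.factorial l : ℝ) / (Nat.factorial l : ℝ)
      ≤ K * (b + 1) ^ l / (Nat.factorial l : ℝ) := (div_le_div_iff_of_pos_right h1).2 (hKb l)
    _ = K * ((b + 1) ^ l / (Nat.factorial l : ℝ)) := by ring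

lemma I0_eq (a x : ℝ) : I0 (a * x) = ∑' n, cb ((a / 2) ^ 2) n * (x ^ 2) ^ n := by
  unfold I0 cb
  congr 1; funext n
  rw [pow_mul]
  have : (a * x / 2) ^ 2 = (a / 2) ^ 2 * x ^ 2 := by ring
  rw [this, mul_pow, div_mul_eq_mul_div]

lemma F11_eq (m b x : ℝ) : F11 m (b * x ^ 2) = ∑' l, cf m b l * (x ^ 2) ^ l := by
  unfold F11 cf
  congr 1; funext l
  rw [mul_pow]
  ring

noncomputable def DD (A B : ℝ) (i : ℕ) : ℝ := ∑ n ∈ Finset.range (i + 1), cb A n * cb B (i - n)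
noncomputable def GG (m b A B : ℝ) (k : ℕ) : ℝ :=
  ∑ i ∈ Finset.range (k + 1), cf m b (k - i) * DD A B i

lemma DD_nonneg {A B : ℝ} (hA : 0 ≤ A) (hB : 0 ≤ B) (i : ℕ) : 0 ≤ DD A B i :=
  Finset.sum_nonneg fun n _ => mul_nonneg (cb_nonneg hA n) (cb_nonneg hB _)

lemma GG_nonneg {m b A B : ℝ} (hm : 0 < m) (hb : 0 ≤ b) (hA : 0 ≤ A) (hB : 0 ≤ B) (k : ℕ) :
    0 ≤ GG m b A B k :=
  Finset.sum_nonneg fun i _ => mul_nonneg (cf_nonneg hm hb _) (DD_nonneg hA hB i)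

lemma summable_norm_cb_mul_pow {A y : ℝ} (hA : 0 ≤ A) (hy : 0 ≤ y) :
    Summable fun n => ‖cb A n * y ^ n‖ := by
  have h : ∀ n, cb A n * y ^ n = cb (A * y) n := by
    intro n; unfold cb; rw [mul_pow]; ring
  have h2 : Summable fun n => cb A n * y ^ n := by
    simp_rw [h]; exact summable_cb (by positivity)
  refine h2.congr fun n => ?_
  rw [Real.norm_of_nonneg (mul_nonneg (cb_nonneg hA n) (by positivity))]

lemma summable_norm_cf_mul_pow {m b y : ℝ} (hm : 0 < m) (hb : 0 ≤ b) (hy : 0 ≤ y) :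
    Summable fun l => ‖cf m b l * y ^ l‖ := by
  have h : ∀ l, cf m b l * y ^ l = cf m (b * y) l := by
    intro l; unfold cf; rw [mul_pow]; ring
  have h2 : Summable fun l => cf m b l * y ^ l := by
    simp_rw [h]; exact summable_cf hm (by positivity)
  refine h2.congr fun l => ?_
  rw [Real.norm_of_nonneg (mul_nonneg (cf_nonneg hm hb l) (by positivity))]

lemma antidiag_DD {A B y : ℝ} (i : ℕ) :
    ∑ pq ∈ Finset.HasAntidiagonal.antidiagonal i, (cb A pq.1 * y ^ pq.1) * (cb B pq.2 * y ^ pq.2)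
      = DD A B i * y ^ i := by
  rw [Finset.Nat.sum_antidiagonal_eq_sum_range_succ_mk]
  unfold DD
  rw [Finset.sum_mul]
  refine Finset.sum_congr rfl fun n hn => ?_
  have hni : n ≤ i := Nat.lt_succ_iff.mp (Finset.mem_range.mp hn)
  have : y ^ n * y ^ (i - n) = y ^ i := by
    rw [← pow_add, Nat.add_sub_cancel' hni]
  calc cb A n * y ^ n * (cb B (i - n) * y ^ (i - n))
      = cb A n * cb B (i - n) * (y ^ n * y ^ (i - n)) := by ring
    _ = cb A n * cb B (i - n) * y ^ i := by rw [this]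

lemma antidiag_GG {m b A B y : ℝ} (k : ℕ) :
    ∑ pq ∈ Finset.HasAntidiagonal.antidiagonal k, (cf m b pq.1 * y ^ pq.1) * (DD A B pq.2 * y ^ pq.2)
      = GG m b A B k * y ^ k := by
  rw [Finset.Nat.sum_antidiagonal_eq_sum_range_succ_mk]
  unfold GG
  rw [Finset.sum_mul]
  rw [← Finset.sum_range_reflect]
  refine Finset.sum_congr rfl fun i hi => ?_
  have hik : i ≤ k := Nat.lt_succ_iff.mp (Finset.mem_range.mp hi)
  have h1 : k + 1 - 1 - i = k - i := by omega
  have h2 : k - (k - i) = i := by omega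
  have h3 : y ^ (k - i) * y ^ (k - (k - i)) = y ^ k := by
    rw [← pow_add]; congr 1; omega
  rw [h1, h2]
  calc cf m b (k - i) * y ^ (k - i) * (DD A B i * y ^ i)
      = cf m b (k - i) * DD A B i * (y ^ (k - i) * y ^ i) := by ring
    _ = cf m b (k - i) * DD A B i * y ^ k := by rw [← pow_add]; congr 2; omega

lemma summable_norm_DD {A B y : ℝ} (hA : 0 ≤ A) (hB : 0 ≤ B) (hy : 0 ≤ y) :
    Summable fun i => ‖DD A B i * y ^ i‖ := by
  have := summable_norm_sum_mul_antidiagonal_of_summable_norm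
    (summable_norm_cb_mul_pow hA hy) (summable_norm_cb_mul_pow hB hy)
  refine this.congr fun i => ?_
  rw [antidiag_DD]

lemma summable_norm_GG {m b A B y : ℝ} (hm : 0 < m) (hb : 0 ≤ b) (hA : 0 ≤ A) (hB : 0 ≤ B)
    (hy : 0 ≤ y) : Summable fun k => ‖GG m b A B k * y ^ k‖ := by
  have := summable_norm_sum_mul_antidiagonal_of_summable_norm
    (summable_norm_cf_mul_pow hm hb hy) (summable_norm_DD hA hB hy)
  refine this.congr fun k => ?_
  rw [antidiag_GG]

lemma expand_prod {m b A B y : ℝ} (hm : 0 < m) (hb : 0 ≤ b) (hA : 0 ≤ A) (hB : 0 ≤ B)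
    (hy : 0 ≤ y) :
    (∑' l, cf m b l * y ^ l) * ((∑' n, cb A n * y ^ n) * (∑' n, cb B n * y ^ n))
      = ∑' k, GG m b A B k * y ^ k := by
  have h1 : (∑' n, cb A n * y ^ n) * (∑' n, cb B n * y ^ n) = ∑' i, DD A B i * y ^ i := by
    rw [tsum_mul_tsum_eq_tsum_sum_antidiagonal_of_summable_norm
      (summable_norm_cb_mul_pow hA hy) (summable_norm_cb_mul_pow hB hy)]
    exact tsum_congr fun i => antidiag_DD i
  rw [h1]
  rw [tsum_mul_tsum_eq_tsum_sum_antidiagonal_of_summable_norm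
    (summable_norm_cf_mul_pow hm hb hy) (summable_norm_DD hA hB hy)]
  exact tsum_congr fun k => antidiag_GG k

lemma moment_integrable {c : ℝ} (hc : 0 < c) (k : ℕ) :
    IntegrableOn (fun x : ℝ => x ^ (2 * k + 1) * Real.exp (-c * x ^ 2)) (Set.Ioi 0) := by
  have h := integrableOn_rpow_mul_exp_neg_mul_sq hc (s := ((2 * k + 1 : ℕ) : ℝ))
    (by push_cast; linarith [Nat.cast_nonneg (α := ℝ) k])
  refine h.congr_fun (fun x hx => ?_) measurableSet_Ioi
  simp only [Real.rpow_natCast]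

lemma moment_eq {c : ℝ} (hc : 0 < c) (k : ℕ) :
    ∫ x in Set.Ioi (0 : ℝ), x ^ (2 * k + 1) * Real.exp (-c * x ^ 2)
      = (Nat.factorial k : ℝ) / (2 * c ^ (k + 1)) := by
  have h := integral_rpow_mul_exp_neg_mul_rpow (p := 2) (q := ((2 * k + 1 : ℕ) : ℝ))
    two_pos (by push_cast; linarith [Nat.cast_nonneg (α := ℝ) k]) hc
  have hL : (∫ x in Set.Ioi (0 : ℝ), x ^ (((2 * k + 1 : ℕ) : ℝ)) * Real.exp (-c * x ^ (2 : ℝ)))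
      = ∫ x in Set.Ioi (0 : ℝ), x ^ (2 * k + 1) * Real.exp (-c * x ^ 2) := by
    refine setIntegral_congr_fun measurableSet_Ioi (fun x hx => ?_)
    rw [Real.rpow_natCast]
    norm_num
  rw [hL] at h
  rw [h]
  have h1 : (-(((2 * k + 1 : ℕ) : ℝ) + 1) / 2) = -((k : ℝ) + 1) := by push_cast; ring
  have h2 : ((((2 * k + 1 : ℕ) : ℝ)) + 1) / 2 = (k : ℝ) + 1 := by push_cast; ring
  rw [h1, h2, Real.Gamma_nat_eq_factorial]
  rw [Real.rpow_neg hc.le, ← Real.rpow_natCast c (k + 1)]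
  have : ((k + 1 : ℕ) : ℝ) = (k : ℝ) + 1 := by push_cast; ring
  rw [this]
  have hcp : (0:ℝ) < c ^ ((k : ℝ) + 1) := Real.rpow_pos_of_pos hc _
  rw [eq_div_iff (by positivity : (2 : ℝ) * c ^ ((k : ℝ) + 1) ≠ 0)]
  have hne : c ^ ((k : ℝ) + 1) ≠ 0 := hcp.ne'
  calc (c ^ ((k : ℝ) + 1))⁻¹ * (1 / 2) * (Nat.factorial k : ℝ) * (2 * c ^ ((k : ℝ) + 1))
      = (Nat.factorial k : ℝ) * ((c ^ ((k : ℝ) + 1))⁻¹ * c ^ ((k : ℝ) + 1)) := by ring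
    _ = (Nat.factorial k : ℝ) := by rw [inv_mul_cancel₀ hne, mul_one]

lemma choose_le_two_pow_real (i n : ℕ) (h : n ≤ i) : ((i.choose n : ℕ) : ℝ) ≤ 2 ^ i := by
  have : i.choose n ≤ 2 ^ i := by
    calc i.choose n ≤ ∑ j ∈ Finset.range (i + 1), i.choose j :=
          Finset.single_le_sum (fun j _ => Nat.zero_le _) (Finset.mem_range.2 (Nat.lt_succ_of_le h))
      _ = 2 ^ i := Nat.sum_range_choose i
  exact_mod_cast this

lemma DD_le {A B : ℝ} (hA : 0 ≤ A) (hB : 0 ≤ B) (i : ℕ) :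
    DD A B i ≤ 2 ^ i * (A + B) ^ i / (Nat.factorial i : ℝ) ^ 2 := by
  have key : ∀ n ∈ Finset.range (i + 1), cb A n * cb B (i - n)
      ≤ 2 ^ i * (A ^ n * B ^ (i - n) * (i.choose n : ℝ)) / (Nat.factorial i : ℝ) ^ 2 := by
    intro n hn
    have hni : n ≤ i := Nat.lt_succ_iff.mp (Finset.mem_range.mp hn)
    have hfact : (Nat.factorial i : ℝ) = (i.choose n : ℝ) * n.factorial * (i - n).factorial := by
      exact_mod_cast (Nat.choose_mul_factorial_mul_factorial hni).symm
    have hch : (0:ℝ) < (i.choose n : ℝ) := by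
      exact_mod_cast Nat.choose_pos hni
    have hn1 : (0:ℝ) < (Nat.factorial n : ℝ) := by positivity
    have hn2 : (0:ℝ) < (Nat.factorial (i - n) : ℝ) := by positivity
    have heq : cb A n * cb B (i - n)
        = (i.choose n : ℝ) ^ 2 * (A ^ n * B ^ (i - n)) / (Nat.factorial i : ℝ) ^ 2 := by
      unfold cb
      rw [hfact]
      field_simp
    rw [heq]
    have h2 : (i.choose n : ℝ) ^ 2 * (A ^ n * B ^ (i - n))
        ≤ 2 ^ i * (A ^ n * B ^ (i - n) * (i.choose n : ℝ)) := by
      have := choose_le_two_pow_real i n hni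
      calc (i.choose n : ℝ) ^ 2 * (A ^ n * B ^ (i - n))
          = ((i.choose n : ℝ) * (A ^ n * B ^ (i - n))) * (i.choose n : ℝ) := by ring
        _ ≤ ((i.choose n : ℝ) * (A ^ n * B ^ (i - n))) * 2 ^ i := by
            apply mul_le_mul_of_nonneg_left this
            positivity
        _ = 2 ^ i * (A ^ n * B ^ (i - n) * (i.choose n : ℝ)) := by ring
    exact div_le_div_of_nonneg_right h2 (by positivity) |>.trans_eq rfl
  calc DD A B i ≤ ∑ n ∈ Finset.range (i + 1),
        2 ^ i * (A ^ n * B ^ (i - n) * (i.choose n : ℝ)) / (Nat.factorial i : ℝ) ^ 2 :=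
        Finset.sum_le_sum key
    _ = 2 ^ i * (A + B) ^ i / (Nat.factorial i : ℝ) ^ 2 := by
        rw [add_pow, Finset.mul_sum, Finset.sum_div]

lemma summable_S {m b c A B : ℝ} (hm : 0 < m) (hb : 0 ≤ b) (hbc : b < c)
    (hA : 0 ≤ A) (hB : 0 ≤ B) :
    Summable fun k => (Nat.factorial k : ℝ) / (2 * c ^ (k + 1)) * GG m b A B k := by
  have hc : 0 < c := lt_of_le_of_lt hb hbc
  set θ : ℝ := (b + c) / 2 with hθdef
  set ε : ℝ := (c - b) / 4 with hεdef
  have hθ : 0 < θ := by rw [hθdef]; linarith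
  have hbθ : b < θ := by rw [hθdef]; linarith
  have hε : 0 < ε := by rw [hεdef]; linarith
  have hθε : θ + ε < c := by rw [hθdef, hεdef]; linarith
  obtain ⟨K, hK, hKb⟩ := exists_poch_bound hm hb hθ hbθ
  set Q : ℝ := 2 * (A + B) / ε with hQdef
  have hQ : 0 ≤ Q := by positivity
  set ρ : ℝ := (θ + ε) / c with hρdef
  have hρ0 : 0 ≤ ρ := by positivity
  have hρ1 : ρ < 1 := (div_lt_one hc).2 hθε
  -- per-k bound
  have hbound : ∀ k : ℕ, (Nat.factorial k : ℝ) / (2 * c ^ (k + 1)) * GG m b A B k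
      ≤ K * Real.exp Q / (2 * c) * ρ ^ k := by
    intro k
    have hck : (0:ℝ) < c ^ (k + 1) := by positivity
    have hkfac : (0:ℝ) < (Nat.factorial k : ℝ) := by positivity
    -- bound GG termwise after multiplying by k!
    have hterm : ∀ i ∈ Finset.range (k + 1),
        (Nat.factorial k : ℝ) * (cf m b (k - i) * DD A B i)
          ≤ K * (θ + ε) ^ k * (Q ^ i / (Nat.factorial i : ℝ)) := by
      intro i hi
      have hik : i ≤ k := Nat.lt_succ_iff.mp (Finset.mem_range.mp hi)
      have hfi : (0:ℝ) < (Nat.factorial i : ℝ) := by positivity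
      have hfki : (0:ℝ) < (Nat.factorial (k - i) : ℝ) := by positivity
      have hcf : cf m b (k - i) ≤ K * θ ^ (k - i) / (Nat.factorial (k - i) : ℝ) := by
        have h1 : cf m b (k - i)
            = (poch m (k - i) * b ^ (k - i) / (Nat.factorial (k - i) : ℝ))
              / (Nat.factorial (k - i) : ℝ) := by
          unfold cf; rw [div_div, ← sq]
        rw [h1, div_le_div_iff₀ hfki hfki]
        have h2 := hKb (k - i)
        nlinarith [Nat.one_le_cast (α := ℝ) |>.2 (Nat.one_le_iff_ne_zero.2
          (Nat.factorial_ne_zero (k - i))), mul_le_mul_of_nonneg_right h2 hfki.le,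
          mul_nonneg (mul_nonneg hK.le (pow_nonneg hθ.le (k-i))) hfki.le]
      have hDD := DD_le hA hB i
      have hcf0 : 0 ≤ cf m b (k - i) := cf_nonneg hm hb _
      have hDD0 : 0 ≤ DD A B i := DD_nonneg hA hB i
      have hprod : cf m b (k - i) * DD A B i
          ≤ (K * θ ^ (k - i) / (Nat.factorial (k - i) : ℝ))
            * (2 ^ i * (A + B) ^ i / (Nat.factorial i : ℝ) ^ 2) :=
        mul_le_mul hcf hDD hDD0 (by positivity)
      have hchoose : (k.choose i : ℝ) * θ ^ (k - i) * ε ^ i ≤ (θ + ε) ^ k := by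
        have hmem : k - i ∈ Finset.range (k + 1) := Finset.mem_range.2 (by omega)
        have hsingle := Finset.single_le_sum
          (f := fun j => θ ^ j * ε ^ (k - j) * ((k.choose j : ℕ) : ℝ))
          (fun j _ => by positivity) hmem
        rw [← add_pow] at hsingle
        have h3 : k - (k - i) = i := by omega
        have hsingle' : θ ^ (k - i) * ε ^ (k - (k - i)) * ((k.choose (k - i) : ℕ) : ℝ)
            ≤ (θ + ε) ^ k := hsingle
        rw [h3, Nat.choose_symm hik] at hsingle'
        calc (k.choose i : ℝ) * θ ^ (k - i) * ε ^ i
            = θ ^ (k - i) * ε ^ i * (k.choose i : ℝ) := by ring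
          _ ≤ (θ + ε) ^ k := hsingle'
      have halg : (Nat.factorial k : ℝ)
          * ((K * θ ^ (k - i) / (Nat.factorial (k - i) : ℝ))
            * (2 ^ i * (A + B) ^ i / (Nat.factorial i : ℝ) ^ 2))
          = K * ((k.choose i : ℝ) * θ ^ (k - i)) * ((2 * (A + B)) ^ i)
            / (Nat.factorial i : ℝ) := by
        have hfact : (Nat.factorial k : ℝ)
            = (k.choose i : ℝ) * (Nat.factorial i : ℝ) * (Nat.factorial (k - i) : ℝ) := by
          exact_mod_cast (Nat.choose_mul_factorial_mul_factorial hik).symm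
        rw [hfact, mul_pow]
        field_simp
      have hchoose2 : K * ((k.choose i : ℝ) * θ ^ (k - i)) * ((2 * (A + B)) ^ i)
            / (Nat.factorial i : ℝ)
          ≤ K * (θ + ε) ^ k * (Q ^ i / (Nat.factorial i : ℝ)) := by
        have hQi : Q ^ i = (2 * (A + B)) ^ i / ε ^ i := by
          rw [hQdef, div_pow]
        rw [hQi]
        have hcθ : (k.choose i : ℝ) * θ ^ (k - i) ≤ (θ + ε) ^ k / ε ^ i := by
          rw [le_div_iff₀ (by positivity)]
          exact hchoose
        calc K * ((k.choose i : ℝ) * θ ^ (k - i)) * ((2 * (A + B)) ^ i)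
              / (Nat.factorial i : ℝ)
            ≤ K * ((θ + ε) ^ k / ε ^ i) * ((2 * (A + B)) ^ i) / (Nat.factorial i : ℝ) := by
              gcongr
          _ = K * (θ + ε) ^ k * ((2 * (A + B)) ^ i / ε ^ i / (Nat.factorial i : ℝ)) := by
              ring
      calc (Nat.factorial k : ℝ) * (cf m b (k - i) * DD A B i)
          ≤ (Nat.factorial k : ℝ)
            * ((K * θ ^ (k - i) / (Nat.factorial (k - i) : ℝ))
              * (2 ^ i * (A + B) ^ i / (Nat.factorial i : ℝ) ^ 2)) := by
            exact mul_le_mul_of_nonneg_left hprod hkfac.le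
        _ = K * ((k.choose i : ℝ) * θ ^ (k - i)) * ((2 * (A + B)) ^ i)
            / (Nat.factorial i : ℝ) := halg
        _ ≤ K * (θ + ε) ^ k * (Q ^ i / (Nat.factorial i : ℝ)) := hchoose2
    -- now sum up
    have hsum : (Nat.factorial k : ℝ) * GG m b A B k
        ≤ K * (θ + ε) ^ k * Real.exp Q := by
      unfold GG
      rw [Finset.mul_sum]
      calc ∑ i ∈ Finset.range (k + 1), (Nat.factorial k : ℝ) * (cf m b (k - i) * DD A B i)
          ≤ ∑ i ∈ Finset.range (k + 1), K * (θ + ε) ^ k * (Q ^ i / (Nat.factorial i : ℝ)) :=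
            Finset.sum_le_sum hterm
        _ = K * (θ + ε) ^ k * ∑ i ∈ Finset.range (k + 1), Q ^ i / (Nat.factorial i : ℝ) := by
            rw [Finset.mul_sum]
        _ ≤ K * (θ + ε) ^ k * Real.exp Q := by
            apply mul_le_mul_of_nonneg_left (Real.sum_le_exp_of_nonneg hQ (k + 1))
            positivity
    calc (Nat.factorial k : ℝ) / (2 * c ^ (k + 1)) * GG m b A B k
        = ((Nat.factorial k : ℝ) * GG m b A B k) / (2 * c ^ (k + 1)) := by ring
      _ ≤ (K * (θ + ε) ^ k * Real.exp Q) / (2 * c ^ (k + 1)) := by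
          apply div_le_div_of_nonneg_right hsum (by positivity) |>.trans_eq rfl
      _ = K * Real.exp Q / (2 * c) * ρ ^ k := by
          rw [hρdef, div_pow, pow_succ]
          field_simp
  have hS0 : ∀ k : ℕ, 0 ≤ (Nat.factorial k : ℝ) / (2 * c ^ (k + 1)) * GG m b A B k := by
    intro k
    have := GG_nonneg hm hb hA hB k
    positivity
  exact Summable.of_nonneg_of_le hS0 hbound
    (((summable_geometric_of_lt_one hρ0 hρ1).mul_left _))


lemma double_sum_eq_GG (m a₁ a₂ b : ℝ) (k : ℕ) :
    (∑ i ∈ Finset.range (k + 1), ∑ n ∈ Finset.range (i + 1),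
      (poch m (k - i) * b ^ (k - i) / (Nat.factorial (k - i) : ℝ) ^ 2) *
      ((a₁ / 2) ^ (2 * n) / (Nat.factorial n : ℝ) ^ 2) *
      ((a₂ / 2) ^ (2 * (i - n)) / (Nat.factorial (i - n) : ℝ) ^ 2))
    = GG m b ((a₁ / 2) ^ 2) ((a₂ / 2) ^ 2) k := by
  unfold GG DD cf cb
  refine Finset.sum_congr rfl fun i _ => ?_
  rw [Finset.mul_sum]
  refine Finset.sum_congr rfl fun n _ => ?_
  rw [pow_mul, pow_mul]
  ring

theorem integral_I0_I0_F11 (m a₁ a₂ b c : ℝ) (hm : 0 < m) (ha₁ : 0 ≤ a₁) (ha₂ : 0 ≤ a₂)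
    (hb : 0 ≤ b) (hbc : b < c) :
    IntegrableOn (fun x : ℝ =>
      x * Real.exp (-c * x ^ 2) * I0 (a₁ * x) * I0 (a₂ * x) * F11 m (b * x ^ 2))
      (Set.Ioi 0) ∧
    Summable (fun k : ℕ =>
      ((Nat.factorial k : ℝ) / (2 * c ^ (k + 1))) *
        ∑ i ∈ Finset.range (k + 1), ∑ n ∈ Finset.range (i + 1),
          (poch m (k - i) * b ^ (k - i) / (Nat.factorial (k - i) : ℝ) ^ 2) *
          ((a₁ / 2) ^ (2 * n) / (Nat.factorial n : ℝ) ^ 2) *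
          ((a₂ / 2) ^ (2 * (i - n)) / (Nat.factorial (i - n) : ℝ) ^ 2)) ∧
    (∫ x in Set.Ioi (0 : ℝ),
        x * Real.exp (-c * x ^ 2) * I0 (a₁ * x) * I0 (a₂ * x) * F11 m (b * x ^ 2)) =
      ∑' k : ℕ,
        ((Nat.factorial k : ℝ) / (2 * c ^ (k + 1))) *
          ∑ i ∈ Finset.range (k + 1), ∑ n ∈ Finset.range (i + 1),
            (poch m (k - i) * b ^ (k - i) / (Nat.factorial (k - i) : ℝ) ^ 2) *
            ((a₁ / 2) ^ (2 * n) / (Nat.factorial n : ℝ) ^ 2) *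
            ((a₂ / 2) ^ (2 * (i - n)) / (Nat.factorial (i - n) : ℝ) ^ 2) := by
  have hc : 0 < c := lt_of_le_of_lt hb hbc
  have hA : 0 ≤ (a₁ / 2) ^ 2 := sq_nonneg _
  have hB : 0 ≤ (a₂ / 2) ^ 2 := sq_nonneg _
  set A := (a₁ / 2) ^ 2 with hAdef
  set B := (a₂ / 2) ^ 2 with hBdef
  set G : ℕ → ℝ := GG m b A B with hGdef
  set f : ℕ → ℝ → ℝ := fun k x => G k * (x ^ (2 * k + 1) * Real.exp (-c * x ^ 2)) with hfdef
  set F : ℝ → ℝ := fun x =>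
    x * Real.exp (-c * x ^ 2) * I0 (a₁ * x) * I0 (a₂ * x) * F11 m (b * x ^ 2) with hFdef
  have hG0 : ∀ k, 0 ≤ G k := GG_nonneg hm hb hA hB
  have hsummable_fx : ∀ x : ℝ, Summable fun k => f k x := by
    intro x
    have h1 : Summable fun k => G k * (x ^ 2) ^ k :=
      (summable_norm_GG hm hb hA hB (sq_nonneg x)).of_norm
    refine (h1.mul_left (x * Real.exp (-c * x ^ 2))).congr fun k => ?_
    simp only [hfdef]
    ring
  have hfx_nonneg : ∀ k, ∀ x : ℝ, 0 ≤ x → 0 ≤ f k x := fun k x hx =>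
    mul_nonneg (hG0 k) (mul_nonneg (pow_nonneg hx _) (Real.exp_nonneg _))
  have hFx : ∀ x : ℝ, F x = ∑' k, f k x := by
    intro x
    have step : F x = (x * Real.exp (-c * x ^ 2)) *
        ((∑' l, cf m b l * (x ^ 2) ^ l) *
          ((∑' n, cb A n * (x ^ 2) ^ n) * (∑' n, cb B n * (x ^ 2) ^ n))) := by
      simp only [hFdef]
      rw [I0_eq a₁ x, I0_eq a₂ x, F11_eq m b x]
      ring
    rw [step, expand_prod hm hb hA hB (sq_nonneg x), ← tsum_mul_left]
    exact tsum_congr fun k => by simp only [hfdef]; ring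
  have hfmeas : ∀ k, Measurable (f k) := by
    intro k
    apply Measurable.const_mul
    exact (measurable_id.pow_const _).mul
      (((measurable_id.pow_const 2).const_mul (-c)).exp)
  have hFmeas : Measurable F := by
    have hFeq : F = fun x => ∑' k, f k x := funext hFx
    rw [hFeq]
    apply measurable_of_tendsto_metrizable
      (f := fun N x => ∑ k ∈ Finset.range N, f k x)
      (fun N => Finset.measurable_sum (Finset.range N) fun k _ => hfmeas k)
    rw [tendsto_pi_nhds]
    intro x
    exact (hsummable_fx x).hasSum.tendsto_sum_nat
  have hint : ∀ k, IntegrableOn (f k) (Set.Ioi 0) := fun k =>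
    (moment_integrable hc k).const_mul (G k)
  have hval : ∀ k, (∫ x in Set.Ioi (0 : ℝ), f k x)
      = G k * ((Nat.factorial k : ℝ) / (2 * c ^ (k + 1))) := by
    intro k
    simp only [hfdef]
    rw [MeasureTheory.integral_const_mul, moment_eq hc k]
  have hS : Summable fun k => (Nat.factorial k : ℝ) / (2 * c ^ (k + 1)) * G k :=
    summable_S hm hb hbc hA hB
  have hnorm : ∀ k, (∫ x in Set.Ioi (0 : ℝ), ‖f k x‖)
      = G k * ((Nat.factorial k : ℝ) / (2 * c ^ (k + 1))) := by
    intro k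
    rw [← hval k]
    refine setIntegral_congr_fun measurableSet_Ioi fun x hx => ?_
    exact Real.norm_of_nonneg (hfx_nonneg k x (le_of_lt hx))
  have hSnorm : Summable fun k => ∫ x in Set.Ioi (0 : ℝ), ‖f k x‖ := by
    refine hS.congr fun k => ?_
    rw [hnorm k, mul_comm]
  have hae : ∀ k, 0 ≤ᵐ[volume.restrict (Set.Ioi (0 : ℝ))] f k := by
    intro k
    filter_upwards [ae_restrict_mem measurableSet_Ioi] with x hx
    exact hfx_nonneg k x (le_of_lt hx)
  have hFae0 : 0 ≤ᵐ[volume.restrict (Set.Ioi (0 : ℝ))] F := by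
    filter_upwards [ae_restrict_mem measurableSet_Ioi] with x hx
    rw [hFx x]
    exact tsum_nonneg fun k => hfx_nonneg k x (le_of_lt hx)
  have per_lint : ∀ k, (∫⁻ x in Set.Ioi (0 : ℝ), ENNReal.ofReal (f k x))
      = ENNReal.ofReal (G k * ((Nat.factorial k : ℝ) / (2 * c ^ (k + 1)))) := by
    intro k
    rw [← ofReal_integral_eq_lintegral_ofReal (hint k) (hae k), hval k]
  have key_lint : (∫⁻ x in Set.Ioi (0 : ℝ), ENNReal.ofReal (F x))
      = ∑' k, ∫⁻ x in Set.Ioi (0 : ℝ), ENNReal.ofReal (f k x) := by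
    rw [← MeasureTheory.lintegral_tsum (fun k => ((hfmeas k).ennreal_ofReal).aemeasurable)]
    refine lintegral_congr_ae ?_
    filter_upwards [ae_restrict_mem measurableSet_Ioi] with x hx
    rw [hFx x, ENNReal.ofReal_tsum_of_nonneg (fun k => hfx_nonneg k x (le_of_lt hx))
      (hsummable_fx x)]
  have hfin : (∫⁻ x in Set.Ioi (0 : ℝ), ENNReal.ofReal (F x)) ≠ ⊤ := by
    rw [key_lint]
    have hS' : Summable fun k => G k * ((Nat.factorial k : ℝ) / (2 * c ^ (k + 1))) :=
      hS.congr fun k => by rw [mul_comm]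
    calc ∑' k, ∫⁻ x in Set.Ioi (0 : ℝ), ENNReal.ofReal (f k x)
        = ∑' k, ENNReal.ofReal (G k * ((Nat.factorial k : ℝ) / (2 * c ^ (k + 1)))) :=
          tsum_congr per_lint
      _ = ENNReal.ofReal (∑' k, G k * ((Nat.factorial k : ℝ) / (2 * c ^ (k + 1)))) :=
          (ENNReal.ofReal_tsum_of_nonneg
            (fun k => mul_nonneg (hG0 k) (by positivity)) hS').symm
      _ ≠ ⊤ := ENNReal.ofReal_ne_top
  have hIntF : IntegrableOn F (Set.Ioi 0) := by
    refine ⟨hFmeas.aestronglyMeasurable, ?_⟩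
    rw [hasFiniteIntegral_iff_ofReal hFae0]
    exact lt_top_iff_ne_top.2 hfin
  have hvalue : (∫ x in Set.Ioi (0 : ℝ), F x)
      = ∑' k, G k * ((Nat.factorial k : ℝ) / (2 * c ^ (k + 1))) := by
    have hinterchange := MeasureTheory.integral_tsum_of_summable_integral_norm
      (fun k => hint k) hSnorm
    calc (∫ x in Set.Ioi (0 : ℝ), F x) = ∫ x in Set.Ioi (0 : ℝ), ∑' k, f k x :=
          integral_congr_ae (Filter.Eventually.of_forall fun x => hFx x)
      _ = ∑' k, ∫ x in Set.Ioi (0 : ℝ), f k x := hinterchange.symm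
      _ = _ := tsum_congr hval
  refine ⟨hIntF, ?_, ?_⟩
  · refine hS.congr fun k => ?_
    simp only [hGdef, hAdef, hBdef]
    rw [double_sum_eq_GG m a₁ a₂ b k]
  · rw [hvalue]
    refine tsum_congr fun k => ?_
    simp only [hGdef, hAdef, hBdef]
    rw [double_sum_eq_GG m a₁ a₂ b k, mul_comm]
end

section
/- Let σ > 0, 0 < ρ < 1, m > 0, K > 0, and γ ≥ 0. Then the marginal CDF of R₁, given by F_{R₁}(γ) = ∫₀^∞ ∫₀^γ f(r₁,r₂) dr₁ dr₂, equals the convergent series ∑_{k=0}^∞ ∑_{i=0}^{k} ∑_{n=0}^{i} ∑_{j=0}^∞ α(k,i,n) G(j,n,i−n,γ). -/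
open MeasureTheory

/-- Series coefficient `α(k,i,n)` of the bivariate Rician shadowed joint PDF. -/
noncomputable def alpha (σ ρ m K : ℝ) (k i n : ℕ) : ℝ :=
  (8 * Real.rpow (m * ρ / (m * ρ + K)) m / (σ ^ 6 * ρ * (1 - ρ) ^ 2)) *
  (poch m (k - i) * (K / (σ ^ 2 * ρ * (ρ * m + K))) ^ (k - i) /
    (Nat.factorial (k - i) : ℝ) ^ 2) *
  (1 / ((Nat.factorial n : ℝ) ^ 2 * (Nat.factorial (i - n) : ℝ) ^ 2 *
    (σ ^ 2 * (1 - ρ)) ^ (2 * i))) *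
  ((Nat.factorial k : ℝ) / (2 * ((1 + ρ) / (σ ^ 2 * ρ * (1 - ρ))) ^ (k + 1)))

/-- Closed-form power series of the bivariate Rician shadowed joint PDF. -/
noncomputable def fpdf (σ ρ m K r₁ r₂ : ℝ) : ℝ :=
  ∑' k : ℕ, ∑ i ∈ Finset.range (k + 1), ∑ n ∈ Finset.range (i + 1),
    alpha σ ρ m K k i n * r₁ ^ (2 * n + 1) * r₂ ^ (2 * (i - n) + 1) *
      Real.exp (-(r₁ ^ 2 + r₂ ^ 2) / (σ ^ 2 * (1 - ρ)))

/-- `G(j,l,q,γ) = (−1)^j γ^{2(l+j+1)} q! (σ²(1−ρ))^{q+1−j} / (j!·4(l+j+1))`. -/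
noncomputable def Gfun (σ ρ : ℝ) (j l q : ℕ) (γ : ℝ) : ℝ :=
  (-1 : ℝ) ^ j * γ ^ (2 * (l + j + 1)) * (Nat.factorial q : ℝ) *
    (σ ^ 2 * (1 - ρ)) ^ ((q : ℤ) + 1 - (j : ℤ)) /
    ((Nat.factorial j : ℝ) * (4 * (l + j + 1)))

/-- `Ḡ(λ,k)`, the `(2(k+1))`-th moment of the BPP distance distribution. -/
noncomputable def Gbar (Dalt ra lam : ℝ) (k : ℕ) : ℝ :=
  ((Dalt ^ 2 + lam ^ 2 + ra ^ 2) ^ (k + 2) - (Dalt ^ 2 + lam ^ 2) ^ (k + 2)) /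
    (ra ^ 2 * (k + 2))




lemma poch_nonneg {m : ℝ} (hm : 0 ≤ m) (k : ℕ) : 0 ≤ poch m k :=
  Finset.prod_nonneg fun j _ => by positivity

lemma poch_le_pow_mul_factorial {m : ℝ} {N : ℕ} (hm : 0 ≤ m) (hmN : m ≤ N) :
    ∀ j, poch m j ≤ (j + 1 : ℝ) ^ N * (Nat.factorial j : ℝ)
  | 0 => by simp [poch]
  | (j + 1) => by
      have ih := poch_le_pow_mul_factorial hm hmN j
      rw [poch_succ]
      have hj : (0:ℝ) < (j:ℝ) + 1 := by positivity
      have h2 : m + j ≤ (N:ℝ) + j := by linarith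
      have hpoch := poch_nonneg hm j
      have hmj : (0:ℝ) ≤ m + j := by positivity
      have step1 : poch m j * (m + j) ≤ ((j + 1 : ℝ) ^ N * (Nat.factorial j : ℝ)) * ((N:ℝ) + j) := by
        apply mul_le_mul ih h2 hmj (by positivity)
      refine step1.trans ?_
      have key : (j + 1 : ℝ) ^ N * ((N:ℝ) + j) ≤ (j + 2 : ℝ) ^ N * ((j:ℝ) + 1) := by
        have hb : 1 + (N:ℝ) * (1 / ((j:ℝ) + 1)) ≤ (1 + 1 / ((j:ℝ) + 1)) ^ N := by
          apply one_add_mul_le_pow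
          have : (0:ℝ) < 1 / ((j:ℝ)+1) := by positivity
          linarith
        have e1 : (1 + 1 / ((j:ℝ) + 1)) = ((j:ℝ) + 2) / ((j:ℝ) + 1) := by
          field_simp; ring
        rw [e1, div_pow] at hb
        rw [le_div_iff₀ (by positivity)] at hb
        have h3 : (1 + (N:ℝ) * (1 / ((j:ℝ) + 1))) * ((j:ℝ)+1) = (j:ℝ) + 1 + N := by
          field_simp
        have hpp : (0:ℝ) ≤ (j+1:ℝ)^N := by positivity
        nlinarith [mul_le_mul_of_nonneg_right hb (le_of_lt hj)]
      calc ((j + 1 : ℝ) ^ N * (Nat.factorial j : ℝ)) * ((N:ℝ) + j)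
          = ((j + 1 : ℝ) ^ N * ((N:ℝ) + j)) * (Nat.factorial j : ℝ) := by ring
        _ ≤ ((j + 2 : ℝ) ^ N * ((j:ℝ) + 1)) * (Nat.factorial j : ℝ) := by
            apply mul_le_mul_of_nonneg_right key (by positivity)
        _ = ((↑(j+1) : ℝ) + 1) ^ N * (Nat.factorial (j+1) : ℝ) := by
            rw [Nat.factorial_succ]; push_cast; ring

lemma momB_integrableOn {c : ℝ} (hc : 0 < c) (q : ℕ) :
    IntegrableOn (fun r : ℝ => r ^ (2 * q + 1) * Real.exp (-(r ^ 2) / c)) (Set.Ioi 0) := by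
  have h := integrableOn_rpow_mul_exp_neg_mul_sq (b := 1 / c) (by positivity)
    (s := (2 * q + 1 : ℝ)) (neg_one_lt_zero.trans_le (by positivity))
  apply h.congr_fun ?_ measurableSet_Ioi
  intro x hx
  have hx' : (0:ℝ) < x := hx
  show x ^ ((2 * (q:ℝ) + 1)) * Real.exp (-(1/c) * x ^ 2) = x ^ (2 * q + 1) * Real.exp (-(x ^ 2) / c)
  rw [show (2 * (q:ℝ) + 1) = ((2 * q + 1 : ℕ) : ℝ) by push_cast; ring, Real.rpow_natCast]
  congr 1
  ring

lemma momB_eq {c : ℝ} (hc : 0 < c) (q : ℕ) :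
    ∫ r in Set.Ioi (0:ℝ), r ^ (2 * q + 1) * Real.exp (-(r ^ 2) / c)
      = (Nat.factorial q : ℝ) * c ^ (q + 1) / 2 := by
  have h := integral_rpow_mul_exp_neg_mul_rpow (p := 2) (q := (2 * q + 1 : ℝ))
    (b := 1 / c) two_pos (neg_one_lt_zero.trans_le (by positivity)) (by positivity)
  have e1 : ∀ x ∈ Set.Ioi (0:ℝ), x ^ ((2 * (q:ℝ) + 1)) * Real.exp (-(1/c) * x ^ (2:ℝ))
      = x ^ (2 * q + 1) * Real.exp (-(x ^ 2) / c) := by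
    intro x hx
    have hx' : (0:ℝ) < x := hx
    rw [show (2 * (q:ℝ) + 1) = ((2 * q + 1 : ℕ) : ℝ) by push_cast; ring,
      Real.rpow_natCast, show ((2:ℝ)) = ((2 : ℕ) : ℝ) by norm_num, Real.rpow_natCast]
    congr 1
    ring
  rw [setIntegral_congr_fun measurableSet_Ioi e1] at h
  rw [h, show (-(2 * (q:ℝ) + 1 + 1) / 2) = -((q:ℝ) + 1) by ring,
    show ((2 * (q:ℝ) + 1 + 1) / 2) = (q:ℝ) + 1 by ring,
    Real.Gamma_nat_eq_factorial, one_div, Real.inv_rpow hc.le, Real.rpow_neg hc.le, inv_inv,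
    show ((q:ℝ) + 1) = ((q + 1 : ℕ) : ℝ) by push_cast; ring, Real.rpow_natCast]
  ring

noncomputable def Sser (c γ : ℝ) (l j : ℕ) : ℝ :=
  (-1:ℝ)^j * γ ^ (2*(l+j+1)) / ((Nat.factorial j : ℝ) * c^j * (2*((l:ℝ)+(j:ℝ)+1)))

lemma Aint_eq {c γ : ℝ} (hc : 0 < c) (hγ : 0 ≤ γ) (l : ℕ) :
    ∫ r in Set.Ioc (0:ℝ) γ, r ^ (2*l+1) * Real.exp (-(r^2)/c) = ∑' j, Sser c γ l j := by
  set f : ℕ → ℝ → ℝ := fun j r => ((-1:ℝ)^j / ((Nat.factorial j : ℝ) * c^j)) * r^(2*(l+j)+1)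
    with hf
  have hfact : ∀ j : ℕ, (0:ℝ) < (Nat.factorial j : ℝ) := fun j => by
    exact_mod_cast Nat.factorial_pos j
  have hpt : ∀ r : ℝ, r ^ (2*l+1) * Real.exp (-(r^2)/c) = ∑' j, f j r := by
    intro r
    have hexp : Real.exp (-(r^2)/c) = ∑' n : ℕ, (-(r^2)/c)^n / (Nat.factorial n : ℝ) := by
      rw [Real.exp_eq_exp_ℝ, NormedSpace.exp_eq_tsum_div]
    rw [hexp, ← tsum_mul_left]
    refine tsum_congr fun j => ?_
    show r ^ (2*l+1) * ((-(r^2)/c)^j / (Nat.factorial j : ℝ))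
      = ((-1:ℝ)^j / ((Nat.factorial j : ℝ) * c^j)) * r^(2*(l+j)+1)
    have e1 : (-(r^2)/c)^j = (-1:ℝ)^j * r^(2*j) / c^j := by
      rw [div_pow, neg_pow, pow_mul]
    have e2 : r ^ (2*(l+j)+1) = r ^ (2*l+1) * r^(2*j) := by
      rw [← pow_add]; congr 1; ring
    rw [e1, e2]
    field_simp
  rw [setIntegral_congr_fun measurableSet_Ioc (fun r _ => hpt r)]
  have hcont : ∀ j : ℕ, Continuous (f j) := fun j =>
    continuous_const.mul (continuous_pow _)
  rw [integral_tsum (fun j => (hcont j).aestronglyMeasurable) ?_]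
  · refine tsum_congr fun j => ?_
    have h0 : ∫ r in Set.Ioc (0:ℝ) γ, f j r
        = ((-1:ℝ)^j / ((Nat.factorial j : ℝ) * c^j)) * ∫ r in Set.Ioc (0:ℝ) γ, r^(2*(l+j)+1) := by
      exact integral_const_mul _ _
    rw [h0, ← intervalIntegral.integral_of_le hγ, integral_pow]
    rw [zero_pow (by omega : 2*(l+j)+1+1 ≠ 0)]
    rw [show 2*(l+j)+1+1 = 2*(l+j+1) by ring]
    unfold Sser
    rw [show ((2*(l+j)+1 : ℕ) : ℝ) + 1 = 2*((l:ℝ)+(j:ℝ)+1) by push_cast; ring]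
    have h1 : ((Nat.factorial j : ℝ) * c^j) ≠ 0 := by positivity
    have h2 : (2*((l:ℝ)+(j:ℝ)+1)) ≠ 0 := by positivity
    field_simp
    simp
  · set Cb : ℕ → ℝ := fun j => γ^(2*l+1) * ((γ^2/c)^j / (Nat.factorial j : ℝ)) with hCb
    have hCb_nonneg : ∀ j, 0 ≤ Cb j := fun j => by positivity
    have hCb_sum : Summable Cb := (Real.summable_pow_div_factorial (γ^2/c)).mul_left _
    have hbound : ∀ j : ℕ, ∫⁻ r in Set.Ioc (0:ℝ) γ, ‖f j r‖₊
        ≤ ENNReal.ofReal (Cb j) * ENNReal.ofReal γ := by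
      intro j
      have hle : ∀ r ∈ Set.Ioc (0:ℝ) γ, (‖f j r‖₊ : ENNReal) ≤ ENNReal.ofReal (Cb j) := by
        intro r hr
        rw [← enorm_eq_nnnorm, ← ofReal_norm]
        apply ENNReal.ofReal_le_ofReal
        have hr0 : 0 < r := hr.1
        have hrγ : r ≤ γ := hr.2
        have hD : (0:ℝ) < (Nat.factorial j : ℝ) * c^j := by positivity
        have hnorm : ‖f j r‖ = 1 / ((Nat.factorial j : ℝ) * c^j) * r^(2*(l+j)+1) := by
          rw [hf]
          show ‖((-1:ℝ)^j / ((Nat.factorial j : ℝ) * c^j)) * r^(2*(l+j)+1)‖ = _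
          rw [norm_mul, norm_div, norm_pow, norm_pow, norm_neg, norm_one, one_pow,
            Real.norm_eq_abs, Real.norm_eq_abs, abs_of_pos hr0, abs_of_pos hD]
        rw [hnorm]
        have hrpow : r^(2*(l+j)+1) ≤ γ^(2*(l+j)+1) := pow_le_pow_left₀ hr0.le hrγ _
        have e3 : Cb j = 1 / ((Nat.factorial j : ℝ) * c^j) * γ^(2*(l+j)+1) := by
          show γ^(2*l+1) * ((γ^2/c)^j / (Nat.factorial j : ℝ)) = _
          rw [div_pow, ← pow_mul,
            show γ^(2*(l+j)+1) = γ^(2*l+1) * γ^(2*j) from by rw [← pow_add]; congr 1; ring]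
          ring
        rw [e3]
        exact mul_le_mul_of_nonneg_left hrpow (by positivity)
      calc ∫⁻ r in Set.Ioc (0:ℝ) γ, ‖f j r‖₊
          ≤ ∫⁻ _ in Set.Ioc (0:ℝ) γ, ENNReal.ofReal (Cb j) := by
            apply lintegral_mono_ae
            rw [ae_restrict_iff' measurableSet_Ioc]
            exact Filter.Eventually.of_forall hle
        _ = ENNReal.ofReal (Cb j) * volume (Set.Ioc (0:ℝ) γ) := setLIntegral_const _ _
        _ ≤ ENNReal.ofReal (Cb j) * ENNReal.ofReal γ := by
            rw [Real.volume_Ioc]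
            exact mul_le_mul_right (ENNReal.ofReal_le_ofReal (by linarith)) _
    apply ne_top_of_le_ne_top ?_ (ENNReal.tsum_le_tsum hbound)
    rw [ENNReal.tsum_mul_right, ← ENNReal.ofReal_tsum_of_nonneg hCb_nonneg hCb_sum]
    exact ENNReal.mul_ne_top ENNReal.ofReal_ne_top ENNReal.ofReal_ne_top



section core
variable {σ ρ m K : ℝ}

lemma alpha_nonneg (hσ : 0 < σ) (hρ0 : 0 < ρ) (hρ1 : ρ < 1) (hm : 0 < m) (hK : 0 < K)
    (k i n : ℕ) : 0 ≤ alpha σ ρ m K k i n := by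
  have h1 : (0:ℝ) < 1 - ρ := by linarith
  have hA : (0:ℝ) < (1 + ρ) / (σ ^ 2 * ρ * (1 - ρ)) :=
    div_pos (by linarith) (by positivity)
  have hpoch := poch_nonneg hm.le (k - i)
  have hrpow : (0:ℝ) ≤ Real.rpow (m * ρ / (m * ρ + K)) m :=
    Real.rpow_nonneg (by positivity) m
  unfold alpha
  apply mul_nonneg
  apply mul_nonneg
  apply mul_nonneg
  · positivity
  · apply div_nonneg (mul_nonneg hpoch (by positivity)) (by positivity)
  · positivity
  · exact div_nonneg (by positivity) (by positivity)

lemma alpha_term_le (hσ : 0 < σ) (hρ0 : 0 < ρ) (hρ1 : ρ < 1) (hm : 0 < m) (hK : 0 < K)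
    {k i n : ℕ} (hn : n ≤ i) (hi : i ≤ k) :
    alpha σ ρ m K k i n * ((Nat.factorial n : ℝ) * (σ^2*(1-ρ))^n)
        * ((Nat.factorial (i-n) : ℝ) * (σ^2*(1-ρ))^(i-n))
      ≤ ((8 * Real.rpow (m * ρ / (m * ρ + K)) m / (σ ^ 6 * ρ * (1 - ρ) ^ 2))
          / (2 * ((1 + ρ) / (σ ^ 2 * ρ * (1 - ρ)))))
        * ((k:ℝ)+1)^(Nat.ceil m)
        * (1 / ((1 + ρ) / (σ ^ 2 * ρ * (1 - ρ))))^k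
        * ((k.choose i : ℝ) * (K / (σ ^ 2 * ρ * (ρ * m + K)))^(k-i)
            * ((i.choose n : ℝ) * (1/(σ^2*(1-ρ)))^i)) := by
  have h1 : (0:ℝ) < 1 - ρ := by linarith
  have hA : (0:ℝ) < (1 + ρ) / (σ ^ 2 * ρ * (1 - ρ)) :=
    div_pos (by linarith) (by positivity)
  have hrpow : (0:ℝ) ≤ Real.rpow (m * ρ / (m * ρ + K)) m :=
    Real.rpow_nonneg (by positivity) m
  set N := Nat.ceil m with hN
  set C0 : ℝ := 8 * Real.rpow (m * ρ / (m * ρ + K)) m / (σ ^ 6 * ρ * (1 - ρ) ^ 2) with hC0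
  set A : ℝ := (1 + ρ) / (σ ^ 2 * ρ * (1 - ρ)) with hAdef
  set x : ℝ := K / (σ ^ 2 * ρ * (ρ * m + K)) with hxdef
  have hC0n : 0 ≤ C0 := by rw [hC0]; positivity
  have hxn : 0 ≤ x := by rw [hxdef]; positivity
  set R : ℝ := C0 / (2*A) * (1/A)^k
        * ((k.choose i : ℝ) * x^(k-i) * ((i.choose n : ℝ) * (1/(σ^2*(1-ρ)))^i)) with hR
  have hRn : 0 ≤ R := by
    rw [hR]
    have : (0:ℝ) ≤ 1/A := by positivity
    positivity
  have hpochb : poch m (k-i) / (Nat.factorial (k-i) : ℝ) ≤ ((k:ℝ)+1)^N := by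
    rw [div_le_iff₀ (by exact_mod_cast Nat.factorial_pos (k-i))]
    refine (poch_le_pow_mul_factorial hm.le (Nat.le_ceil m) (k-i)).trans ?_
    apply mul_le_mul_of_nonneg_right ?_ (by positivity)
    apply pow_le_pow_left₀ (by positivity)
    have : (k - i : ℕ) ≤ k := Nat.sub_le k i
    have h2 : ((k - i : ℕ) : ℝ) ≤ (k:ℝ) := by exact_mod_cast this
    linarith
  have hEq : alpha σ ρ m K k i n * ((Nat.factorial n : ℝ) * (σ^2*(1-ρ))^n)
        * ((Nat.factorial (i-n) : ℝ) * (σ^2*(1-ρ))^(i-n))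
      = (poch m (k-i) / (Nat.factorial (k-i) : ℝ)) * R := by
    obtain ⟨q, rfl⟩ : ∃ q, i = n + q := ⟨i - n, by omega⟩
    obtain ⟨d, rfl⟩ : ∃ d, k = n + q + d := ⟨k - (n + q), by omega⟩
    have e1 : n + q - n = q := by omega
    have e2 : n + q + d - (n + q) = d := by omega
    rw [hR, hAdef, hxdef, hC0]
    unfold alpha
    rw [e1, e2, Nat.cast_choose ℝ (show n ≤ n + q by omega),
      Nat.cast_choose ℝ (show n + q ≤ n + q + d by omega), e1, e2]
    have hf1 : (Nat.factorial n : ℝ) ≠ 0 := by exact_mod_cast (Nat.factorial_pos n).ne'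
    have hf2 : (Nat.factorial q : ℝ) ≠ 0 := by exact_mod_cast (Nat.factorial_pos q).ne'
    have hf3 : (Nat.factorial d : ℝ) ≠ 0 := by exact_mod_cast (Nat.factorial_pos d).ne'
    have hf4 : (Nat.factorial (n+q) : ℝ) ≠ 0 := by exact_mod_cast (Nat.factorial_pos _).ne'
    have hf5 : (Nat.factorial (n+q+d) : ℝ) ≠ 0 := by exact_mod_cast (Nat.factorial_pos _).ne'
    have hc' : (σ^2*(1-ρ)) ≠ 0 := by positivity
    have hA' : A ≠ 0 := ne_of_gt hA
    have hσ' : σ ≠ 0 := ne_of_gt hσ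
    have hρ' : ρ ≠ 0 := ne_of_gt hρ0
    have h1' : (1-ρ) ≠ 0 := ne_of_gt h1
    rw [hAdef] at hA'
    generalize (1 + ρ) / (σ ^ 2 * ρ * (1 - ρ)) = A' at hA' ⊢
    generalize σ ^ 2 * (1 - ρ) = c at hc' ⊢
    generalize K / (σ ^ 2 * ρ * (ρ * m + K)) = x' at ⊢
    generalize 8 * Real.rpow (m * ρ / (m * ρ + K)) m / (σ ^ 6 * ρ * (1 - ρ) ^ 2) = C' at ⊢
    field_simp
    rw [one_div_pow, one_div_pow]
    field_simp
    ring
  rw [hEq]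
  calc (poch m (k-i) / (Nat.factorial (k-i) : ℝ)) * R ≤ ((k:ℝ)+1)^N * R :=
        mul_le_mul_of_nonneg_right hpochb hRn
    _ = C0 / (2*A) * ((k:ℝ)+1)^N * (1/A)^k
        * ((k.choose i : ℝ) * x^(k-i) * ((i.choose n : ℝ) * (1/(σ^2*(1-ρ)))^i)) := by
        rw [hR]; ring

end core

section core2
variable {σ ρ m K : ℝ}

lemma u_le (hσ : 0 < σ) (hρ0 : 0 < ρ) (hρ1 : ρ < 1) (hm : 0 < m) (hK : 0 < K) (k : ℕ) :
    ∑ i ∈ Finset.range (k+1), ∑ n ∈ Finset.range (i+1),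
        alpha σ ρ m K k i n * ((Nat.factorial n : ℝ) * (σ^2*(1-ρ))^n)
          * ((Nat.factorial (i-n) : ℝ) * (σ^2*(1-ρ))^(i-n))
      ≤ ((8 * Real.rpow (m * ρ / (m * ρ + K)) m / (σ ^ 6 * ρ * (1 - ρ) ^ 2))
            / (2 * ((1 + ρ) / (σ ^ 2 * ρ * (1 - ρ)))))
        * (((k:ℝ)+1)^(Nat.ceil m)
          * ((2/(σ^2*(1-ρ)) + K / (σ ^ 2 * ρ * (ρ * m + K)))
              / ((1 + ρ) / (σ ^ 2 * ρ * (1 - ρ))))^k) := by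
  have h1 : (0:ℝ) < 1 - ρ := by linarith
  have hA : (0:ℝ) < (1 + ρ) / (σ ^ 2 * ρ * (1 - ρ)) :=
    div_pos (by linarith) (by positivity)
  set N := Nat.ceil m with hN
  set C0 : ℝ := 8 * Real.rpow (m * ρ / (m * ρ + K)) m / (σ ^ 6 * ρ * (1 - ρ) ^ 2) with hC0
  set A : ℝ := (1 + ρ) / (σ ^ 2 * ρ * (1 - ρ)) with hAdef
  set x : ℝ := K / (σ ^ 2 * ρ * (ρ * m + K)) with hxdef
  set c : ℝ := σ^2*(1-ρ) with hcdef
  set Cst : ℝ := C0 / (2*A) * ((k:ℝ)+1)^N * (1/A)^k with hCst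
  have step1 : ∑ i ∈ Finset.range (k+1), ∑ n ∈ Finset.range (i+1),
        alpha σ ρ m K k i n * ((Nat.factorial n : ℝ) * c^n)
          * ((Nat.factorial (i-n) : ℝ) * c^(i-n))
      ≤ ∑ i ∈ Finset.range (k+1), ∑ n ∈ Finset.range (i+1),
          (Cst * ((k.choose i : ℝ) * x^(k-i) * ((i.choose n : ℝ) * (1/c)^i))) := by
    refine Finset.sum_le_sum fun i hi => Finset.sum_le_sum fun n hn => ?_
    have hi' : i ≤ k := by simpa [Nat.lt_succ_iff] using Finset.mem_range.mp hi
    have hn' : n ≤ i := by simpa [Nat.lt_succ_iff] using Finset.mem_range.mp hn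
    exact alpha_term_le hσ hρ0 hρ1 hm hK hn' hi'
  refine step1.trans (le_of_eq ?_)
  have e_i : ∀ i : ℕ, ∑ n ∈ Finset.range (i+1),
        (Cst * ((k.choose i : ℝ) * x^(k-i) * ((i.choose n : ℝ) * (1/c)^i)))
      = ((2/c)^i * x^(k-i) * (k.choose i : ℝ)) * Cst := by
    intro i
    have h2 : ∀ n : ℕ, Cst * ((k.choose i : ℝ) * x^(k-i) * ((i.choose n : ℝ) * (1/c)^i))
        = (Cst * ((k.choose i : ℝ) * x^(k-i) * (1/c)^i)) * (i.choose n : ℝ) := fun n => by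
      ring
    simp only [h2]
    rw [← Finset.mul_sum, ← Nat.cast_sum, Nat.sum_range_choose]
    push_cast
    ring
  rw [Finset.sum_congr rfl (fun i _ => e_i i), ← Finset.sum_mul, ← add_pow]
  rw [hCst]
  simp only [div_pow, one_pow]
  ring
end core2

section core3
variable {σ ρ m K : ℝ}

lemma ratio_lt_one (hσ : 0 < σ) (hρ0 : 0 < ρ) (hρ1 : ρ < 1) (hm : 0 < m) (hK : 0 < K) :
    0 < (2/(σ^2*(1-ρ)) + K / (σ ^ 2 * ρ * (ρ * m + K)))
        / ((1 + ρ) / (σ ^ 2 * ρ * (1 - ρ)))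
    ∧ (2/(σ^2*(1-ρ)) + K / (σ ^ 2 * ρ * (ρ * m + K)))
        / ((1 + ρ) / (σ ^ 2 * ρ * (1 - ρ))) < 1 := by
  have h1 : (0:ℝ) < 1 - ρ := by linarith
  have hA : (0:ℝ) < (1 + ρ) / (σ ^ 2 * ρ * (1 - ρ)) :=
    div_pos (by linarith) (by positivity)
  have hnum : (0:ℝ) < 2/(σ^2*(1-ρ)) + K / (σ ^ 2 * ρ * (ρ * m + K)) := by positivity
  constructor
  · exact div_pos hnum hA
  · rw [div_lt_one hA]
    have hx : K / (σ ^ 2 * ρ * (ρ * m + K)) < 1 / (σ^2 * ρ) := by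
      rw [div_lt_div_iff₀ (by positivity) (by positivity)]
      nlinarith [mul_pos (mul_pos (pow_pos hσ 2) hρ0) (mul_pos hρ0 hm)]
    have hid : 1 / (σ^2 * ρ) + 2/(σ^2*(1-ρ)) = (1 + ρ) / (σ ^ 2 * ρ * (1 - ρ)) := by
      field_simp
      ring
    linarith

lemma summable_u (hσ : 0 < σ) (hρ0 : 0 < ρ) (hρ1 : ρ < 1) (hm : 0 < m) (hK : 0 < K) :
    Summable (fun k : ℕ => ∑ i ∈ Finset.range (k+1), ∑ n ∈ Finset.range (i+1),
        alpha σ ρ m K k i n * ((Nat.factorial n : ℝ) * (σ^2*(1-ρ))^n)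
          * ((Nat.factorial (i-n) : ℝ) * (σ^2*(1-ρ))^(i-n))) := by
  have h1 : (0:ℝ) < 1 - ρ := by linarith
  set r : ℝ := (2/(σ^2*(1-ρ)) + K / (σ ^ 2 * ρ * (ρ * m + K)))
        / ((1 + ρ) / (σ ^ 2 * ρ * (1 - ρ))) with hrdef
  obtain ⟨hr0, hr1⟩ := ratio_lt_one hσ hρ0 hρ1 hm hK
  set N := Nat.ceil m with hN
  have hgeom : Summable (fun k : ℕ => ((k:ℝ))^N * r^k) :=
    summable_pow_mul_geometric_of_norm_lt_one N
      (by rw [Real.norm_eq_abs, abs_of_nonneg hr0.le]; exact hr1)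
  have hshift : Summable (fun k : ℕ => ((k:ℝ)+1)^N * r^(k+1)) := by
    have := hgeom.comp_injective Nat.succ_injective
    refine this.congr fun k => ?_
    simp only [Function.comp_apply, Nat.succ_eq_add_one]
    push_cast
    ring
  have hgeom' : Summable (fun k : ℕ => ((k:ℝ)+1)^N * r^k) := by
    refine (hshift.mul_left (1/r)).congr fun k => ?_
    have : r ≠ 0 := ne_of_gt hr0
    field_simp
    ring
  refine Summable.of_nonneg_of_le ?_ (fun k => u_le hσ hρ0 hρ1 hm hK k)
    (hgeom'.mul_left _)
  intro k
  refine Finset.sum_nonneg fun i _ => Finset.sum_nonneg fun n _ => ?_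
  have := alpha_nonneg hσ hρ0 hρ1 hm hK k i n
  positivity

end core3

noncomputable def Aint (c γ : ℝ) (l : ℕ) : ℝ :=
  ∫ r in Set.Ioc (0:ℝ) γ, r ^ (2*l+1) * Real.exp (-(r^2)/c)

lemma Aint_tsum {c γ : ℝ} (hc : 0 < c) (hγ : 0 ≤ γ) (l : ℕ) :
    Aint c γ l = ∑' j, Sser c γ l j := Aint_eq hc hγ l

lemma Aint_nonneg (c γ : ℝ) (l : ℕ) : 0 ≤ Aint c γ l :=
  setIntegral_nonneg measurableSet_Ioc fun r hr =>
    mul_nonneg (pow_nonneg hr.1.le _) (Real.exp_nonneg _)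

lemma Aint_le {c γ : ℝ} (hc : 0 < c) (hγ : 0 ≤ γ) (l : ℕ) :
    Aint c γ l ≤ (Nat.factorial l : ℝ) * c^(l+1)/2 := by
  rw [← momB_eq hc l]
  apply setIntegral_mono_set (momB_integrableOn hc l)
  · filter_upwards [ae_restrict_mem measurableSet_Ioi] with r hr
    exact mul_nonneg (pow_nonneg (le_of_lt hr) _) (Real.exp_nonneg _)
  · exact HasSubset.Subset.eventuallyLE Set.Ioc_subset_Ioi_self

lemma exp_split (c r₁ r₂ : ℝ) :
    Real.exp (-(r₁^2 + r₂^2)/c) = Real.exp (-(r₁^2)/c) * Real.exp (-(r₂^2)/c) := by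
  rw [← Real.exp_add]; congr 1; ring

lemma pow_mul_exp_le {c : ℝ} (hc : 0 < c) (q : ℕ) {r : ℝ} (hr : 0 ≤ r) :
    r^(2*q+1) * Real.exp (-(r^2)/c) ≤ (Nat.factorial q : ℝ) * c^q * r := by
  have hfq : (0:ℝ) < (Nat.factorial q : ℝ) := by exact_mod_cast q.factorial_pos
  have h := Real.pow_div_factorial_le_exp (r^2/c) (by positivity) q
  have h2 : (r^2)^q ≤ (Nat.factorial q : ℝ) * c^q * Real.exp (r^2/c) := by
    rw [div_pow] at h
    rw [div_div] at h
    rw [div_le_iff₀ (by positivity)] at h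
    calc (r^2)^q ≤ Real.exp (r^2/c) * (c^q * (Nat.factorial q : ℝ)) := h
      _ = (Nat.factorial q : ℝ) * c^q * Real.exp (r^2/c) := by ring
  have hkey : Real.exp (r^2/c) * Real.exp (-(r^2)/c) = 1 := by
    rw [← Real.exp_add, show r^2/c + -(r^2)/c = 0 by ring, Real.exp_zero]
  calc r^(2*q+1) * Real.exp (-(r^2)/c)
      = (r^2)^q * (r * Real.exp (-(r^2)/c)) := by rw [pow_succ, pow_mul]; ring
    _ ≤ ((Nat.factorial q : ℝ) * c^q * Real.exp (r^2/c)) * (r * Real.exp (-(r^2)/c)) := by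
        apply mul_le_mul_of_nonneg_right h2
        exact mul_nonneg hr (Real.exp_nonneg _)
    _ = (Nat.factorial q : ℝ) * c^q * r * (Real.exp (r^2/c) * Real.exp (-(r^2)/c)) := by ring
    _ = (Nat.factorial q : ℝ) * c^q * r := by rw [hkey, mul_one]

lemma Gfun_eq {σ ρ : ℝ} (hc : 0 < σ^2*(1-ρ)) (γ : ℝ) (j l q : ℕ) :
    Gfun σ ρ j l q γ
      = ((Nat.factorial q : ℝ) * (σ^2*(1-ρ))^(q+1)/2) * Sser (σ^2*(1-ρ)) γ l j := by
  unfold Gfun Sser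
  have hzc : (σ^2*(1-ρ)) ≠ 0 := ne_of_gt hc
  rw [show ((q:ℤ) + 1 - (j:ℤ)) = ((q+1 : ℕ):ℤ) - (j:ℤ) by push_cast; ring,
    zpow_sub₀ hzc, zpow_natCast, zpow_natCast]
  have hfj : (Nat.factorial j : ℝ) ≠ 0 := by exact_mod_cast (Nat.factorial_pos j).ne'
  have hl : ((l:ℝ) + (j:ℝ) + 1) ≠ 0 := by positivity
  field_simp
  ring

noncomputable def tf (σ ρ m K : ℝ) (k i n : ℕ) : ℝ :=
  alpha σ ρ m K k i n * ((Nat.factorial n : ℝ) * (σ^2*(1-ρ))^n)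
    * ((Nat.factorial (i-n) : ℝ) * (σ^2*(1-ρ))^(i-n))

noncomputable def uf (σ ρ m K : ℝ) (k : ℕ) : ℝ :=
  ∑ i ∈ Finset.range (k+1), ∑ n ∈ Finset.range (i+1), tf σ ρ m K k i n

lemma summable_uf {σ ρ m K : ℝ} (hσ : 0 < σ) (hρ0 : 0 < ρ) (hρ1 : ρ < 1) (hm : 0 < m)
    (hK : 0 < K) : Summable (uf σ ρ m K) :=
  summable_u hσ hρ0 hρ1 hm hK

lemma tf_nonneg {σ ρ m K : ℝ} (hσ : 0 < σ) (hρ0 : 0 < ρ) (hρ1 : ρ < 1) (hm : 0 < m)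
    (hK : 0 < K) (k i n : ℕ) : 0 ≤ tf σ ρ m K k i n := by
  have h1 : (0:ℝ) < 1 - ρ := by linarith
  have := alpha_nonneg hσ hρ0 hρ1 hm hK k i n
  unfold tf
  positivity

lemma uf_nonneg {σ ρ m K : ℝ} (hσ : 0 < σ) (hρ0 : 0 < ρ) (hρ1 : ρ < 1) (hm : 0 < m)
    (hK : 0 < K) (k : ℕ) : 0 ≤ uf σ ρ m K k :=
  Finset.sum_nonneg fun i _ => Finset.sum_nonneg fun n _ => tf_nonneg hσ hρ0 hρ1 hm hK k i n

noncomputable def gfun2 (σ ρ m K γ : ℝ) (k : ℕ) (r₂ : ℝ) : ℝ :=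
  ∑ i ∈ Finset.range (k+1), ∑ n ∈ Finset.range (i+1),
    (alpha σ ρ m K k i n * Aint (σ^2*(1-ρ)) γ n)
      * (r₂ ^ (2*(i-n)+1) * Real.exp (-(r₂^2)/(σ^2*(1-ρ))))

lemma lint_norm_eq {s : Set ℝ} (hs : MeasurableSet s) {f : ℝ → ℝ} (hf : IntegrableOn f s)
    (h0 : ∀ r ∈ s, 0 ≤ f r) :
    ∫⁻ r in s, ‖f r‖₊ = ENNReal.ofReal (∫ r in s, f r) := by
  rw [ofReal_integral_eq_lintegral_ofReal hf ((ae_restrict_iff' hs).2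
    (Filter.Eventually.of_forall h0))]
  apply lintegral_congr_ae
  filter_upwards [ae_restrict_mem hs] with r hr
  rw [← enorm_eq_nnnorm, ← ofReal_norm, Real.norm_eq_abs, abs_of_nonneg (h0 r hr)]


theorem marginal_cdf_R1_series (σ ρ m K γ : ℝ)
    (hσ : 0 < σ) (hρ0 : 0 < ρ) (hρ1 : ρ < 1) (hm : 0 < m) (hK : 0 < K) (hγ : 0 ≤ γ) :
    Summable (fun k : ℕ => ∑ i ∈ Finset.range (k + 1), ∑ n ∈ Finset.range (i + 1),
      ∑' j : ℕ, alpha σ ρ m K k i n * Gfun σ ρ j n (i - n) γ) ∧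
    (∫ r₂ in Set.Ioi (0 : ℝ), ∫ r₁ in (0 : ℝ)..γ, fpdf σ ρ m K r₁ r₂) =
      ∑' k : ℕ, ∑ i ∈ Finset.range (k + 1), ∑ n ∈ Finset.range (i + 1),
        ∑' j : ℕ, alpha σ ρ m K k i n * Gfun σ ρ j n (i - n) γ := by
  have h1 : (0:ℝ) < 1 - ρ := by linarith
  have hc : (0:ℝ) < σ^2*(1-ρ) := by positivity
  have halpha : ∀ k i n : ℕ, 0 ≤ alpha σ ρ m K k i n := alpha_nonneg hσ hρ0 hρ1 hm hK
  have husum : Summable (uf σ ρ m K) := summable_uf hσ hρ0 hρ1 hm hK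
  have hun : ∀ k, 0 ≤ uf σ ρ m K k := uf_nonneg hσ hρ0 hρ1 hm hK
  -- continuity of gfun2
  have hg_cont : ∀ k : ℕ, Continuous (gfun2 σ ρ m K γ k) := by
    intro k
    unfold gfun2
    exact continuous_finset_sum _ fun i _ => continuous_finset_sum _ fun n _ =>
      continuous_const.mul ((continuous_pow _).mul (Real.continuous_exp.comp
        (Continuous.div_const (Continuous.neg (continuous_pow 2)) _)))
  have hg_nonneg : ∀ k : ℕ, ∀ r₂ ∈ Set.Ioi (0:ℝ), 0 ≤ gfun2 σ ρ m K γ k r₂ := by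
    intro k r₂ hr₂
    refine Finset.sum_nonneg fun i _ => Finset.sum_nonneg fun n _ => ?_
    have h2 := Aint_nonneg (σ^2*(1-ρ)) γ n
    have h3 := halpha k i n
    have h4 : (0:ℝ) < r₂ := hr₂
    positivity
  have hg_int : ∀ k : ℕ, IntegrableOn (gfun2 σ ρ m K γ k) (Set.Ioi 0) := by
    intro k
    unfold gfun2
    apply integrable_finset_sum _ fun i _ => integrable_finset_sum _ fun n _ => ?_
    exact (momB_integrableOn hc (i-n)).const_mul _
  -- value of the outer integral of gfun2
  have hg_val : ∀ k : ℕ, ∫ r₂ in Set.Ioi (0:ℝ), gfun2 σ ρ m K γ k r₂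
      = ∑ i ∈ Finset.range (k+1), ∑ n ∈ Finset.range (i+1),
          alpha σ ρ m K k i n * Aint (σ^2*(1-ρ)) γ n
            * ((Nat.factorial (i-n) : ℝ) * (σ^2*(1-ρ))^((i-n)+1)/2) := by
    intro k
    unfold gfun2
    rw [integral_finset_sum _ fun i _ =>
      integrable_finset_sum _ fun n _ => (momB_integrableOn hc (i-n)).const_mul _]
    refine Finset.sum_congr rfl fun i _ => ?_
    rw [integral_finset_sum _ fun n _ => (momB_integrableOn hc (i-n)).const_mul _]
    refine Finset.sum_congr rfl fun n _ => ?_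
    rw [integral_const_mul, momB_eq hc (i-n)]
  -- bound of outer value by uf
  have hw_le : ∀ k : ℕ, (∑ i ∈ Finset.range (k+1), ∑ n ∈ Finset.range (i+1),
        alpha σ ρ m K k i n * Aint (σ^2*(1-ρ)) γ n
          * ((Nat.factorial (i-n) : ℝ) * (σ^2*(1-ρ))^((i-n)+1)/2))
      ≤ (σ^2*(1-ρ))^2/4 * uf σ ρ m K k := by
    intro k
    have hstep : ∀ i n : ℕ, alpha σ ρ m K k i n * Aint (σ^2*(1-ρ)) γ n
          * ((Nat.factorial (i-n) : ℝ) * (σ^2*(1-ρ))^((i-n)+1)/2)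
        ≤ (σ^2*(1-ρ))^2/4 * tf σ ρ m K k i n := by
      intro i n
      have hb : alpha σ ρ m K k i n * Aint (σ^2*(1-ρ)) γ n
          ≤ alpha σ ρ m K k i n * ((Nat.factorial n : ℝ) * (σ^2*(1-ρ))^(n+1)/2) :=
        mul_le_mul_of_nonneg_left (Aint_le hc hγ n) (halpha k i n)
      calc alpha σ ρ m K k i n * Aint (σ^2*(1-ρ)) γ n
            * ((Nat.factorial (i-n) : ℝ) * (σ^2*(1-ρ))^((i-n)+1)/2)
          ≤ alpha σ ρ m K k i n * ((Nat.factorial n : ℝ) * (σ^2*(1-ρ))^(n+1)/2)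
            * ((Nat.factorial (i-n) : ℝ) * (σ^2*(1-ρ))^((i-n)+1)/2) := by
            apply mul_le_mul_of_nonneg_right hb (by positivity)
        _ = (σ^2*(1-ρ))^2/4 * tf σ ρ m K k i n := by unfold tf; ring
    calc (∑ i ∈ Finset.range (k+1), ∑ n ∈ Finset.range (i+1),
          alpha σ ρ m K k i n * Aint (σ^2*(1-ρ)) γ n
            * ((Nat.factorial (i-n) : ℝ) * (σ^2*(1-ρ))^((i-n)+1)/2))
        ≤ ∑ i ∈ Finset.range (k+1), ∑ n ∈ Finset.range (i+1),
            (σ^2*(1-ρ))^2/4 * tf σ ρ m K k i n :=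
          Finset.sum_le_sum fun i _ => Finset.sum_le_sum fun n _ => hstep i n
      _ = (σ^2*(1-ρ))^2/4 * uf σ ρ m K k := by
          unfold uf; simp only [← Finset.mul_sum]
  have hw_nonneg : ∀ k : ℕ, 0 ≤ ∑ i ∈ Finset.range (k+1), ∑ n ∈ Finset.range (i+1),
      alpha σ ρ m K k i n * Aint (σ^2*(1-ρ)) γ n
        * ((Nat.factorial (i-n) : ℝ) * (σ^2*(1-ρ))^((i-n)+1)/2) := by
    intro k
    refine Finset.sum_nonneg fun i _ => Finset.sum_nonneg fun n _ => ?_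
    have h2 := Aint_nonneg (σ^2*(1-ρ)) γ n
    have h3 := halpha k i n
    positivity
  -- the inner value equals the tsum over j
  have hw_eq : ∀ k : ℕ, (∑ i ∈ Finset.range (k+1), ∑ n ∈ Finset.range (i+1),
        alpha σ ρ m K k i n * Aint (σ^2*(1-ρ)) γ n
          * ((Nat.factorial (i-n) : ℝ) * (σ^2*(1-ρ))^((i-n)+1)/2))
      = ∑ i ∈ Finset.range (k+1), ∑ n ∈ Finset.range (i+1),
          ∑' j : ℕ, alpha σ ρ m K k i n * Gfun σ ρ j n (i - n) γ := by
    intro k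
    refine Finset.sum_congr rfl fun i _ => Finset.sum_congr rfl fun n _ => ?_
    have e1 : ∀ j : ℕ, alpha σ ρ m K k i n * Gfun σ ρ j n (i-n) γ
        = (alpha σ ρ m K k i n * ((Nat.factorial (i-n) : ℝ) * (σ^2*(1-ρ))^((i-n)+1)/2))
          * Sser (σ^2*(1-ρ)) γ n j := by
      intro j
      rw [Gfun_eq hc γ j n (i-n)]
      ring
    rw [tsum_congr e1, tsum_mul_left, ← Aint_tsum hc hγ n]
    ring
  -- summability of the outer values
  have hsum_w : Summable (fun k : ℕ => ∑ i ∈ Finset.range (k+1), ∑ n ∈ Finset.range (i+1),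
      alpha σ ρ m K k i n * Aint (σ^2*(1-ρ)) γ n
        * ((Nat.factorial (i-n) : ℝ) * (σ^2*(1-ρ))^((i-n)+1)/2)) :=
    Summable.of_nonneg_of_le hw_nonneg hw_le (husum.mul_left _)
  -- inner integral identity
  have hinner : ∀ r₂ ∈ Set.Ioi (0:ℝ), (∫ r₁ in (0:ℝ)..γ, fpdf σ ρ m K r₁ r₂)
      = ∑' k, gfun2 σ ρ m K γ k r₂ := by
    intro r₂ hr₂
    have hr₂' : (0:ℝ) < r₂ := hr₂
    rw [intervalIntegral.integral_of_le hγ]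
    unfold fpdf
    have hcont : ∀ k : ℕ, Continuous (fun r₁ : ℝ => ∑ i ∈ Finset.range (k+1),
        ∑ n ∈ Finset.range (i+1), alpha σ ρ m K k i n * r₁ ^ (2*n+1) * r₂ ^ (2*(i-n)+1)
          * Real.exp (-(r₁^2 + r₂^2)/(σ^2*(1-ρ)))) := by
      intro k
      exact continuous_finset_sum _ fun i _ => continuous_finset_sum _ fun n _ =>
        ((continuous_const.mul (continuous_pow _)).mul continuous_const).mul
          (Real.continuous_exp.comp (Continuous.div_const
            (Continuous.neg ((continuous_pow 2).add continuous_const)) _))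
    have hval : ∀ k : ℕ, (∫ r₁ in Set.Ioc (0:ℝ) γ, ∑ i ∈ Finset.range (k+1),
        ∑ n ∈ Finset.range (i+1), alpha σ ρ m K k i n * r₁ ^ (2*n+1) * r₂ ^ (2*(i-n)+1)
          * Real.exp (-(r₁^2 + r₂^2)/(σ^2*(1-ρ)))) = gfun2 σ ρ m K γ k r₂ := by
      intro k
      have hterm_cont : ∀ i n : ℕ, Continuous (fun r₁ : ℝ =>
          alpha σ ρ m K k i n * r₁ ^ (2*n+1) * r₂ ^ (2*(i-n)+1)
            * Real.exp (-(r₁^2 + r₂^2)/(σ^2*(1-ρ)))) := by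
        intro i n
        exact ((continuous_const.mul (continuous_pow _)).mul continuous_const).mul
          (Real.continuous_exp.comp (Continuous.div_const
            (Continuous.neg ((continuous_pow 2).add continuous_const)) _))
      rw [integral_finset_sum _ fun i _ => integrable_finset_sum _ fun n _ =>
        (hterm_cont i n).integrableOn_Ioc]
      unfold gfun2
      refine Finset.sum_congr rfl fun i _ => ?_
      rw [integral_finset_sum _ fun n _ => (hterm_cont i n).integrableOn_Ioc]
      refine Finset.sum_congr rfl fun n _ => ?_
      have hsplit : ∀ r₁ : ℝ, alpha σ ρ m K k i n * r₁ ^ (2*n+1) * r₂ ^ (2*(i-n)+1)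
          * Real.exp (-(r₁^2 + r₂^2)/(σ^2*(1-ρ)))
          = (alpha σ ρ m K k i n * (r₂ ^ (2*(i-n)+1) * Real.exp (-(r₂^2)/(σ^2*(1-ρ)))))
            * (r₁ ^ (2*n+1) * Real.exp (-(r₁^2)/(σ^2*(1-ρ)))) := by
        intro r₁
        rw [exp_split]
        ring
      simp only [hsplit]
      rw [integral_const_mul]
      unfold Aint
      ring
    rw [integral_tsum (fun k => (hcont k).aestronglyMeasurable) ?_]
    · exact tsum_congr fun k => hval k
    · -- lintegral bound
      have hFk_nonneg : ∀ k : ℕ, ∀ r₁ ∈ Set.Ioc (0:ℝ) γ,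
          0 ≤ ∑ i ∈ Finset.range (k+1), ∑ n ∈ Finset.range (i+1),
            alpha σ ρ m K k i n * r₁ ^ (2*n+1) * r₂ ^ (2*(i-n)+1)
              * Real.exp (-(r₁^2 + r₂^2)/(σ^2*(1-ρ))) := by
        intro k r₁ hr₁
        refine Finset.sum_nonneg fun i _ => Finset.sum_nonneg fun n _ => ?_
        have h2 := halpha k i n
        have h3 : (0:ℝ) < r₁ := hr₁.1
        positivity
      have hb : ∀ k : ℕ, (∫⁻ r₁ in Set.Ioc (0:ℝ) γ, ‖∑ i ∈ Finset.range (k+1),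
          ∑ n ∈ Finset.range (i+1), alpha σ ρ m K k i n * r₁ ^ (2*n+1) * r₂ ^ (2*(i-n)+1)
            * Real.exp (-(r₁^2 + r₂^2)/(σ^2*(1-ρ)))‖₊)
          ≤ ENNReal.ofReal ((σ^2*(1-ρ)) * r₂/2 * uf σ ρ m K k) := by
        intro k
        rw [lint_norm_eq measurableSet_Ioc ((hcont k).integrableOn_Ioc) (hFk_nonneg k)]
        apply ENNReal.ofReal_le_ofReal
        rw [hval k]
        have hstep : ∀ i n : ℕ, (alpha σ ρ m K k i n * Aint (σ^2*(1-ρ)) γ n)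
            * (r₂ ^ (2*(i-n)+1) * Real.exp (-(r₂^2)/(σ^2*(1-ρ))))
            ≤ (σ^2*(1-ρ)) * r₂/2 * tf σ ρ m K k i n := by
          intro i n
          have hb1 : alpha σ ρ m K k i n * Aint (σ^2*(1-ρ)) γ n
              ≤ alpha σ ρ m K k i n * ((Nat.factorial n : ℝ) * (σ^2*(1-ρ))^(n+1)/2) :=
            mul_le_mul_of_nonneg_left (Aint_le hc hγ n) (halpha k i n)
          have hb2 : r₂ ^ (2*(i-n)+1) * Real.exp (-(r₂^2)/(σ^2*(1-ρ)))
              ≤ (Nat.factorial (i-n) : ℝ) * (σ^2*(1-ρ))^(i-n) * r₂ :=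
            pow_mul_exp_le hc (i-n) hr₂'.le
          have h4 := Aint_nonneg (σ^2*(1-ρ)) γ n
          have h5 := halpha k i n
          calc (alpha σ ρ m K k i n * Aint (σ^2*(1-ρ)) γ n)
              * (r₂ ^ (2*(i-n)+1) * Real.exp (-(r₂^2)/(σ^2*(1-ρ))))
              ≤ (alpha σ ρ m K k i n * ((Nat.factorial n : ℝ) * (σ^2*(1-ρ))^(n+1)/2))
                * ((Nat.factorial (i-n) : ℝ) * (σ^2*(1-ρ))^(i-n) * r₂) := by
                apply mul_le_mul hb1 hb2 (by positivity) (by positivity)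
            _ = (σ^2*(1-ρ)) * r₂/2 * tf σ ρ m K k i n := by unfold tf; ring
        calc gfun2 σ ρ m K γ k r₂
            ≤ ∑ i ∈ Finset.range (k+1), ∑ n ∈ Finset.range (i+1),
              (σ^2*(1-ρ)) * r₂/2 * tf σ ρ m K k i n :=
              Finset.sum_le_sum fun i _ => Finset.sum_le_sum fun n _ => hstep i n
          _ = (σ^2*(1-ρ)) * r₂/2 * uf σ ρ m K k := by
              unfold uf; simp only [← Finset.mul_sum]
      apply ne_top_of_le_ne_top ?_ (ENNReal.tsum_le_tsum hb)
      rw [← ENNReal.ofReal_tsum_of_nonneg (fun k => by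
          have := hun k; positivity) (husum.mul_left _)]
      exact ENNReal.ofReal_ne_top
  constructor
  · exact hsum_w.congr fun k => hw_eq k
  · calc (∫ r₂ in Set.Ioi (0:ℝ), ∫ r₁ in (0:ℝ)..γ, fpdf σ ρ m K r₁ r₂)
        = ∫ r₂ in Set.Ioi (0:ℝ), ∑' k, gfun2 σ ρ m K γ k r₂ :=
          setIntegral_congr_fun measurableSet_Ioi hinner
      _ = ∑' k, ∫ r₂ in Set.Ioi (0:ℝ), gfun2 σ ρ m K γ k r₂ := by
          apply integral_tsum (fun k => (hg_cont k).aestronglyMeasurable)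
          have hb : ∀ k : ℕ, (∫⁻ r₂ in Set.Ioi (0:ℝ), ‖gfun2 σ ρ m K γ k r₂‖₊)
              ≤ ENNReal.ofReal ((σ^2*(1-ρ))^2/4 * uf σ ρ m K k) := by
            intro k
            rw [lint_norm_eq measurableSet_Ioi (hg_int k) (hg_nonneg k)]
            apply ENNReal.ofReal_le_ofReal
            rw [hg_val k]
            exact hw_le k
          apply ne_top_of_le_ne_top ?_ (ENNReal.tsum_le_tsum hb)
          rw [← ENNReal.ofReal_tsum_of_nonneg (fun k => by
              have := hun k; positivity) (husum.mul_left _)]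
          exact ENNReal.ofReal_ne_top
      _ = ∑' k, ∑ i ∈ Finset.range (k+1), ∑ n ∈ Finset.range (i+1),
            ∑' j : ℕ, alpha σ ρ m K k i n * Gfun σ ρ j n (i - n) γ := by
          refine tsum_congr fun k => ?_
          rw [hg_val k, hw_eq k]
end

section
/- Let ρ > 0, K > 0, and j ∈ ℕ. Then, as the real parameter m tends to infinity, (mρ/(mρ+K))^m · (m)_j/(ρm+K)^j converges to exp(−K/ρ)·ρ^{−j}. In particular, the coefficients of the bivariate Rician shadowed series converge to the corresponding bivariate Rician coefficients as the shadowing parameter m → ∞. -/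
theorem shadowed_coeff_limit (ρ K : ℝ) (hρ : 0 < ρ) (hK : 0 < K) (j : ℕ) :
    Filter.Tendsto
      (fun m : ℝ => Real.rpow (m * ρ / (m * ρ + K)) m * poch m j / (ρ * m + K) ^ j)
      Filter.atTop (nhds (Real.exp (-K / ρ) / ρ ^ j)) := by
  have h1 : Filter.Tendsto (fun m : ℝ => Real.rpow (m * ρ / (m * ρ + K)) m)
      Filter.atTop (nhds (Real.exp (-K / ρ))) := by
    have base := (Real.tendsto_one_add_div_rpow_exp (K / ρ)).inv₀ (Real.exp_ne_zero _)
    rw [← Real.exp_neg, ← neg_div] at base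
    refine base.congr' ?_
    filter_upwards [Filter.eventually_gt_atTop 0] with m hm
    have hmρ : 0 < m * ρ := mul_pos hm hρ
    have hpos : (0:ℝ) < 1 + K / ρ / m := by positivity
    have hbase : m * ρ / (m * ρ + K) = (1 + K / ρ / m)⁻¹ := by
      have : m * ρ + K ≠ 0 := by positivity
      field_simp
    rw [show ((1 + K / ρ / m) ^ m)⁻¹ = Real.rpow (m * ρ / (m * ρ + K)) m by
      rw [hbase]; exact (Real.inv_rpow hpos.le m).symm]
  have h2 : Filter.Tendsto (fun m : ℝ => poch m j / (ρ * m + K) ^ j)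
      Filter.atTop (nhds ((1 / ρ) ^ j)) := by
    have heq : ∀ᶠ m : ℝ in Filter.atTop,
        (∏ i ∈ Finset.range j, (m + (i : ℝ)) / (ρ * m + K)) = poch m j / (ρ * m + K) ^ j := by
      filter_upwards with m
      rw [Finset.prod_div_distrib, Finset.prod_const, Finset.card_range, poch]
    refine Filter.Tendsto.congr' heq ?_
    rw [show (1 / ρ : ℝ) ^ j = ∏ _i ∈ Finset.range j, (1 / ρ) by
      rw [Finset.prod_const, Finset.card_range]]
    refine tendsto_finset_prod _ (fun i _ => ?_)
    have : Filter.Tendsto (fun m : ℝ => (1 + (i : ℝ) / m) / (ρ + K / m))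
        Filter.atTop (nhds (1 / ρ)) := by
      have hn : Filter.Tendsto (fun m : ℝ => 1 + (i : ℝ) / m) Filter.atTop (nhds 1) := by
        simpa using tendsto_const_nhds.add
          ((tendsto_const_nhds (x := (i:ℝ))).div_atTop Filter.tendsto_id)
      have hd : Filter.Tendsto (fun m : ℝ => ρ + K / m) Filter.atTop (nhds ρ) := by
        simpa using tendsto_const_nhds.add
          ((tendsto_const_nhds (x := K)).div_atTop Filter.tendsto_id)
      exact hn.div hd hρ.ne'
    refine this.congr' ?_
    filter_upwards [Filter.eventually_gt_atTop 0] with m hm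
    have hm' : m ≠ 0 := hm.ne'
    field_simp
  have := h1.mul h2
  rw [show Real.exp (-K / ρ) * (1 / ρ) ^ j = Real.exp (-K / ρ) / ρ ^ j by
    rw [div_pow, one_pow, mul_one_div]] at this
  exact this.congr (fun m => (mul_div_assoc _ _ _).symm)
end
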